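/- Let ρ₁, ρ₂ be quantum states on ℂ^d. Then the minimax optimum is attained by a Bayes-optimal measurement: there exist a₀ ∈ [0,1] and a two-outcome POVM (B₁, B₂) Bayes-optimal for the prior (a₀, 1−a₀) such that min(Tr[ρ₁B₁], Tr[ρ₂B₂]) equals the supremum, over all two-outcome POVMs (P₁, P₂), of min(Tr[ρ₁P₁], Tr[ρ₂P₂]). -/

import Mathlib

open Matrix ComplexOrder

/-- A quantum state on `ℂ^d`: a positive semidefinite matrix with unit trace. -/
def IsQState {d : ℕ} (ρ : Matrix (Fin d) (Fin d) ℂ) : Prop :=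
  ρ.PosSemidef ∧ ρ.trace = 1

/-- A two-outcome POVM: two positive semidefinite matrices summing to the identity. -/
def IsPOVM2 {d : ℕ} (P₁ P₂ : Matrix (Fin d) (Fin d) ℂ) : Prop :=
  P₁.PosSemidef ∧ P₂.PosSemidef ∧ P₁ + P₂ = 1

/-- `(B₁, B₂)` is Bayes-optimal for the prior `(a, 1-a)` and states `ρ₁, ρ₂`:
it is a POVM maximizing `a·Tr[ρ₁P₁] + (1-a)·Tr[ρ₂P₂]` over all two-outcome POVMs. -/
def IsBayesOpt {d : ℕ} (ρ₁ ρ₂ : Matrix (Fin d) (Fin d) ℂ) (a : ℝ)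
    (B₁ B₂ : Matrix (Fin d) (Fin d) ℂ) : Prop :=
  IsPOVM2 B₁ B₂ ∧ ∀ P₁ P₂ : Matrix (Fin d) (Fin d) ℂ, IsPOVM2 P₁ P₂ →
    a * ((ρ₁ * P₁).trace.re) + (1 - a) * ((ρ₂ * P₂).trace.re) ≤
      a * ((ρ₁ * B₁).trace.re) + (1 - a) * ((ρ₂ * B₂).trace.re)

lemma psd_diag_re_nonneg {A : Matrix (Fin d) (Fin d) ℂ} (hA : A.PosSemidef) (i : Fin d) :
    0 ≤ (A i i).re := by
  have := hA.re_dotProduct_nonneg (Pi.single i 1)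
  simpa [dotProduct, mulVec, Pi.single_apply, Finset.sum_ite_eq, Finset.sum_ite_eq'] using this

lemma psd_trace_re_nonneg {A : Matrix (Fin d) (Fin d) ℂ} (hA : A.PosSemidef) :
    0 ≤ A.trace.re := by
  rw [Matrix.trace]
  rw [Complex.re_sum]
  exact Finset.sum_nonneg fun i _ => psd_diag_re_nonneg hA i

lemma trace_mul_re_nonneg {A B : Matrix (Fin d) (Fin d) ℂ}
    (hA : A.PosSemidef) (hB : B.PosSemidef) : 0 ≤ ((A * B).trace).re := by
  obtain ⟨C, rfl⟩ : ∃ C : Matrix (Fin d) (Fin d) ℂ, A = Cᴴ * C := by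
    open scoped MatrixOrder Matrix.Norms.L2Operator in
    exact CStarAlgebra.nonneg_iff_eq_star_mul_self.mp hA.nonneg
  rw [Matrix.mul_assoc, Matrix.trace_mul_comm]
  exact psd_trace_re_nonneg (hB.mul_mul_conjTranspose_same C)

lemma psd_smul_real {A : Matrix (Fin d) (Fin d) ℂ} (hA : A.PosSemidef) {t : ℝ} (ht : 0 ≤ t) :
    (t • A).PosSemidef := by
  refine Matrix.PosSemidef.of_dotProduct_mulVec_nonneg ?_ ?_
  · rw [Matrix.IsHermitian, Matrix.conjTranspose_smul, hA.1.eq, star_trivial]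
  · intro x
    have h0 : (0:ℂ) ≤ (t:ℂ) := by
      rw [Complex.le_def]; simp [ht]
    have : star x ⬝ᵥ (t • A) *ᵥ x = (t:ℂ) * (star x ⬝ᵥ A *ᵥ x) := by
      rw [show (t • A) = (t:ℂ) • A by ext i j; simp [Complex.real_smul]]
      rw [Matrix.smul_mulVec, dotProduct_smul, smul_eq_mul]
    rw [this]
    exact mul_nonneg h0 (hA.dotProduct_mulVec_nonneg x)

lemma isClosed_psd : IsClosed {A : Matrix (Fin d) (Fin d) ℂ | A.PosSemidef} := by
  have hcl : IsClosed {z : ℂ | 0 ≤ z} := by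
    have : {z : ℂ | 0 ≤ z} = Complex.re ⁻¹' Set.Ici 0 ∩ Complex.im ⁻¹' {0} := by
      ext z
      simp only [Set.mem_setOf_eq, Complex.le_def, Set.mem_inter_iff, Set.mem_preimage,
        Set.mem_Ici, Set.mem_singleton_iff]
      constructor
      · rintro ⟨h1, h2⟩; exact ⟨h1, h2.symm⟩
      · rintro ⟨h1, h2⟩; exact ⟨h1, h2.symm⟩
    rw [this]
    exact (isClosed_Ici.preimage Complex.continuous_re).inter
      (isClosed_singleton.preimage Complex.continuous_im)
  have : {A : Matrix (Fin d) (Fin d) ℂ | A.PosSemidef} =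
      {A : Matrix (Fin d) (Fin d) ℂ | Aᴴ = A} ∩
        ⋂ x : Fin d → ℂ, {A | 0 ≤ star x ⬝ᵥ A *ᵥ x} := by
    ext A
    simp [Matrix.posSemidef_iff_dotProduct_mulVec, Matrix.IsHermitian, Set.mem_iInter, forall_and]
  rw [this]
  refine IsClosed.inter (isClosed_eq ?_ continuous_id) (isClosed_iInter fun x => ?_)
  · exact continuous_id.matrix_conjTranspose
  · exact hcl.preimage (continuous_const.dotProduct (continuous_id.matrix_mulVec continuous_const))
variable {d : ℕ}

lemma mulVec_single' (A : Matrix (Fin d) (Fin d) ℂ) (j : Fin d) (c : ℂ) (k : Fin d) :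
    (A *ᵥ Pi.single j c) k = A k j * c := by
  simp [mulVec, dotProduct, Pi.single_apply, mul_ite, Finset.sum_ite_eq']

lemma single_dot' (v : Fin d → ℂ) (i : Fin d) (a : ℂ) :
    Pi.single i a ⬝ᵥ v = a * v i := by
  simp [dotProduct, Pi.single_apply, ite_mul, Finset.sum_ite_eq]

lemma star_single' (k : Fin d) (a : ℂ) :
    star (Pi.single k a : Fin d → ℂ) = Pi.single k (star a) := by
  ext l
  simp only [Pi.star_apply, Pi.single_apply]
  split_ifs <;> simp

lemma diag_bounds {P : Matrix (Fin d) (Fin d) ℂ} (h1 : P.PosSemidef)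
    (h2 : (1 - P).PosSemidef) (k : Fin d) :
    0 ≤ (P k k).re ∧ (P k k).re ≤ 1 := by
  have ha := h1.re_dotProduct_nonneg (Pi.single k 1)
  have hb := h2.re_dotProduct_nonneg (Pi.single k 1)
  have e1 : star (Pi.single k (1:ℂ)) ⬝ᵥ P *ᵥ (Pi.single k (1:ℂ)) = P k k := by
    rw [star_single', single_dot', mulVec_single']
    simp
  have e2 : star (Pi.single k (1:ℂ)) ⬝ᵥ (1 - P) *ᵥ (Pi.single k (1:ℂ)) = 1 - P k k := by
    rw [star_single', single_dot', mulVec_single']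
    simp [Matrix.sub_apply, Matrix.one_apply]
  rw [e1] at ha
  rw [e2] at hb
  have ha' : 0 ≤ (P k k).re := by simpa using ha
  have hb' : 0 ≤ 1 - (P k k).re := by
    simpa [Complex.sub_re] using hb
  exact ⟨ha', by linarith⟩

lemma entry_norm_le {P : Matrix (Fin d) (Fin d) ℂ} (h1 : P.PosSemidef)
    (h2 : (1 - P).PosSemidef) (i j : Fin d) : ‖P i j‖ ≤ Real.sqrt d := by
  have hfro : ((P * Pᴴ).trace).re = ∑ k, ∑ l, Complex.normSq (P k l) := by
    rw [Matrix.trace, Complex.re_sum]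
    congr 1
    ext k
    rw [Matrix.diag_apply, Matrix.mul_apply, Complex.re_sum]
    congr 1
    ext l
    rw [Matrix.conjTranspose_apply]
    rw [show P k l * star (P k l) = ((Complex.normSq (P k l) : ℝ) : ℂ) by
      rw [Complex.star_def, Complex.mul_conj]]
    simp
  have hPH : Pᴴ = P := h1.isHermitian
  have hsub : P * (1 - P) = P - P * P := by
    rw [Matrix.mul_sub, Matrix.mul_one]
  have h2tr : ((P * P).trace).re ≤ (P.trace).re := by
    have := trace_mul_re_nonneg h1 h2
    rw [hsub, Matrix.trace_sub, Complex.sub_re] at this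
    linarith
  have htrP : (P.trace).re ≤ (d : ℝ) := by
    rw [Matrix.trace, Complex.re_sum]
    calc ∑ k, (P k k).re ≤ ∑ _k : Fin d, (1:ℝ) :=
          Finset.sum_le_sum fun k _ => (diag_bounds h1 h2 k).2
      _ = d := by simp
  have hle : Complex.normSq (P i j) ≤ (d : ℝ) := by
    have hsingle : Complex.normSq (P i j) ≤ ∑ k, ∑ l, Complex.normSq (P k l) := by
      calc Complex.normSq (P i j) ≤ ∑ l, Complex.normSq (P i l) :=
            Finset.single_le_sum (fun l _ => Complex.normSq_nonneg _) (Finset.mem_univ j)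
        _ ≤ ∑ k, ∑ l, Complex.normSq (P k l) :=
            Finset.single_le_sum (fun k _ => Finset.sum_nonneg fun l _ => Complex.normSq_nonneg _)
              (Finset.mem_univ i)
    rw [← hfro] at hsingle
    calc Complex.normSq (P i j) ≤ ((P * Pᴴ).trace).re := hsingle
      _ = ((P * P).trace).re := by rw [hPH]
      _ ≤ (P.trace).re := h2tr
      _ ≤ d := htrP
  rw [show ‖P i j‖ = Real.sqrt (Complex.normSq (P i j)) by
    rw [Complex.norm_def]]
  exact Real.sqrt_le_sqrt hle

lemma isCompact_K :
    IsCompact {P : Matrix (Fin d) (Fin d) ℂ | P.PosSemidef ∧ (1 - P).PosSemidef} := by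
  have hclosed : IsClosed {P : Matrix (Fin d) (Fin d) ℂ | P.PosSemidef ∧ (1 - P).PosSemidef} := by
    have : {P : Matrix (Fin d) (Fin d) ℂ | P.PosSemidef ∧ (1 - P).PosSemidef} =
        {P : Matrix (Fin d) (Fin d) ℂ | P.PosSemidef} ∩
        ((fun P : Matrix (Fin d) (Fin d) ℂ => 1 - P) ⁻¹'
          {P : Matrix (Fin d) (Fin d) ℂ | P.PosSemidef}) := rfl
    rw [this]
    exact isClosed_psd.inter (isClosed_psd.preimage (continuous_const.sub continuous_id))
  have hsub : {P : Matrix (Fin d) (Fin d) ℂ | P.PosSemidef ∧ (1 - P).PosSemidef} ⊆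
      (Set.univ.pi fun _i : Fin d => Set.univ.pi fun _j : Fin d =>
        Metric.closedBall (0:ℂ) (Real.sqrt d)) := by
    rintro P ⟨h1, h2⟩
    intro i _
    intro j _
    simpa [Metric.mem_closedBall, dist_zero_right] using entry_norm_le h1 h2 i j
  have hcomp : IsCompact (Set.univ.pi fun _i : Fin d => Set.univ.pi fun _j : Fin d =>
      Metric.closedBall (0:ℂ) (Real.sqrt d)) :=
    isCompact_univ_pi fun _ => isCompact_univ_pi fun _ => isCompact_closedBall _ _
  exact hcomp.of_isClosed_subset hclosed hsub

lemma tfun_affine (ρ : Matrix (Fin d) (Fin d) ℂ) (a b : ℝ) (P Q : Matrix (Fin d) (Fin d) ℂ) :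
    ((ρ * (a • P + b • Q)).trace).re
      = a * ((ρ * P).trace).re + b * ((ρ * Q).trace).re := by
  rw [Matrix.mul_add, Matrix.mul_smul, Matrix.mul_smul, Matrix.trace_add,
    Matrix.trace_smul, Matrix.trace_smul, Complex.add_re, Complex.smul_re,
    Complex.smul_re, smul_eq_mul, smul_eq_mul]

lemma one_sub_comb {a b : ℝ} (hab : a + b = 1) (P Q : Matrix (Fin d) (Fin d) ℂ) :
    (1 : Matrix (Fin d) (Fin d) ℂ) - (a • P + b • Q) = a • (1 - P) + b • (1 - Q) := by
  have h1 : (a • (1 : Matrix (Fin d) (Fin d) ℂ)) + b • (1 : Matrix (Fin d) (Fin d) ℂ)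
      = (1 : Matrix (Fin d) (Fin d) ℂ) := by
    rw [← add_smul, hab, one_smul]
  calc (1 : Matrix (Fin d) (Fin d) ℂ) - (a • P + b • Q)
      = (a • (1 : Matrix (Fin d) (Fin d) ℂ) + b • (1 : Matrix (Fin d) (Fin d) ℂ))
        - (a • P + b • Q) := by rw [h1]
    _ = (a • (1 : Matrix (Fin d) (Fin d) ℂ) - a • P)
        + (b • (1 : Matrix (Fin d) (Fin d) ℂ) - b • Q) := by abel
    _ = a • (1 - P) + b • (1 - Q) := by rw [smul_sub, smul_sub]

lemma key_real {uu vv c : ℝ} (h : ∀ t ε : ℝ, 0 < t → 0 < ε → t * uu + ε * vv < c) :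
    uu ≤ 0 ∧ vv ≤ 0 ∧ 0 ≤ c := by
  have huu : uu ≤ 0 := by
    by_contra hpos
    push_neg at hpos
    have ht : 0 < (|c| + |vv| + 1) / uu := by positivity
    have h1 := h _ 1 ht one_pos
    rw [div_mul_cancel₀ _ (ne_of_gt hpos)] at h1
    have := neg_abs_le vv
    have := le_abs_self c
    linarith
  have hvv : vv ≤ 0 := by
    by_contra hpos
    push_neg at hpos
    have ht : 0 < (|c| + |uu| + 1) / vv := by positivity
    have h1 := h 1 _ one_pos ht
    rw [one_mul, div_mul_cancel₀ _ (ne_of_gt hpos)] at h1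
    have := neg_abs_le uu
    have := le_abs_self c
    linarith
  refine ⟨huu, hvv, ?_⟩
  by_contra hc
  push_neg at hc
  set D : ℝ := |uu| + |vv| + 1 with hD
  have hDpos : 0 < D := by positivity
  set t : ℝ := -c / (2 * D) with htdef
  have htpos : 0 < t := by
    apply div_pos (by linarith) (by linarith)
  have h1 := h t t htpos htpos
  have h2 : t * (-|uu|) ≤ t * uu := by
    apply mul_le_mul_of_nonneg_left (neg_abs_le uu) htpos.le
  have h3 : t * (-|vv|) ≤ t * vv := by
    apply mul_le_mul_of_nonneg_left (neg_abs_le vv) htpos.le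
  have h4 : t * D = -c / 2 := by
    rw [htdef]
    field_simp
  have h5 : t * (-|uu|) + t * (-|vv|) = -(t * D) + t := by
    rw [hD]; ring
  linarith


/-- The minimax optimum is attained by a Bayes-optimal measurement: there are
a prior `a₀ ∈ [0,1]` and a POVM `(B₁,B₂)` Bayes-optimal for `(a₀, 1-a₀)` whose smallest
probability of correct detection equals the supremum over all POVMs of the smallest
probability of correct detection. -/
theorem minimax_attained_by_bayes_opt
    {d : ℕ} (ρ₁ ρ₂ : Matrix (Fin d) (Fin d) ℂ)
    (hρ₁ : IsQState ρ₁) (hρ₂ : IsQState ρ₂) :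
    ∃ a₀ ∈ Set.Icc (0 : ℝ) 1, ∃ B₁ B₂ : Matrix (Fin d) (Fin d) ℂ,
      IsBayesOpt ρ₁ ρ₂ a₀ B₁ B₂ ∧
      min ((ρ₁ * B₁).trace.re) ((ρ₂ * B₂).trace.re) =
        sSup { x : ℝ | ∃ P₁ P₂ : Matrix (Fin d) (Fin d) ℂ, IsPOVM2 P₁ P₂ ∧
          x = min ((ρ₁ * P₁).trace.re) ((ρ₂ * P₂).trace.re) } := by
  classical
  set K : Set (Matrix (Fin d) (Fin d) ℂ) :=
    {P | P.PosSemidef ∧ (1 - P).PosSemidef} with hKdef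
  have hKne : (0 : Matrix (Fin d) (Fin d) ℂ) ∈ K := by
    refine ⟨Matrix.PosSemidef.zero, ?_⟩
    rw [sub_zero]
    exact Matrix.PosSemidef.one
  set t₁ : Matrix (Fin d) (Fin d) ℂ → ℝ := fun P => ((ρ₁ * P).trace).re with ht₁
  set t₂ : Matrix (Fin d) (Fin d) ℂ → ℝ := fun P => ((ρ₂ * (1 - P)).trace).re with ht₂
  have hc₁ : Continuous t₁ :=
    Complex.continuous_re.comp ((continuous_const.matrix_mul continuous_id).matrix_trace)
  have hc₂ : Continuous t₂ :=
    Complex.continuous_re.comp ((continuous_const.matrix_mul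
      (continuous_const.sub continuous_id)).matrix_trace)
  obtain ⟨B, hBK, hBmax⟩ := isCompact_K.exists_isMaxOn ⟨0, hKne⟩
    ((hc₁.min hc₂).continuousOn : ContinuousOn (fun P => min (t₁ P) (t₂ P)) K)
  have hmax : ∀ P ∈ K, min (t₁ P) (t₂ P) ≤ min (t₁ B) (t₂ B) := fun P hP => hBmax hP
  -- the image set
  set S : Set (ℝ × ℝ) := (fun P => (t₁ P, t₂ P)) '' K with hSdef
  have hSconv : Convex ℝ S := by
    rintro p ⟨P, hP, rfl⟩ q ⟨Q, hQ, rfl⟩ a b ha hb hab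
    refine ⟨a • P + b • Q, ⟨?_, ?_⟩, ?_⟩
    · exact ((psd_smul_real hP.1 ha).add (psd_smul_real hQ.1 hb))
    · rw [one_sub_comb hab]
      exact ((psd_smul_real hP.2 ha).add (psd_smul_real hQ.2 hb))
    · have e1 : t₁ (a • P + b • Q) = a * t₁ P + b * t₁ Q := tfun_affine ρ₁ a b P Q
      have e2 : t₂ (a • P + b • Q) = a * t₂ P + b * t₂ Q := by
        show ((ρ₂ * (1 - (a • P + b • Q))).trace).re = _
        rw [one_sub_comb hab, tfun_affine]
      simp only [Prod.smul_mk, Prod.mk_add_mk, smul_eq_mul]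
      rw [Prod.mk.injEq]
      exact ⟨e1, e2⟩
  have hdisj : Disjoint (Set.Ioi (t₁ B) ×ˢ Set.Ioi (t₂ B)) S := by
    rw [Set.disjoint_left]
    rintro p hp ⟨P, hPK, rfl⟩
    rw [Set.mem_prod, Set.mem_Ioi, Set.mem_Ioi] at hp
    have h1 := hmax P hPK
    have h2 : min (t₁ B) (t₂ B) < min (t₁ P) (t₂ P) :=
      lt_min (lt_of_le_of_lt (min_le_left _ _) hp.1)
        (lt_of_le_of_lt (min_le_right _ _) hp.2)
    linarith
  obtain ⟨L, u, hLQ, hLS⟩ := geometric_hahn_banach_open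
    ((convex_Ioi (t₁ B)).prod (convex_Ioi (t₂ B))) (isOpen_Ioi.prod isOpen_Ioi) hSconv hdisj
  set uu : ℝ := L (1, 0) with huu_def
  set vv : ℝ := L (0, 1) with hvv_def
  have hLrep : ∀ p : ℝ × ℝ, L p = p.1 * uu + p.2 * vv := by
    intro p
    have hp : p = p.1 • ((1:ℝ), (0:ℝ)) + p.2 • ((0:ℝ), (1:ℝ)) := by
      rw [Prod.ext_iff]
      simp
    conv_lhs => rw [hp]
    rw [map_add, _root_.map_smul, _root_.map_smul, smul_eq_mul, smul_eq_mul]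
  have hz : u ≤ t₁ B * uu + t₂ B * vv := by
    have := hLS _ ⟨B, hBK, rfl⟩
    rwa [hLrep] at this
  have hkey : ∀ t ε : ℝ, 0 < t → 0 < ε →
      t * uu + ε * vv < u - (t₁ B * uu + t₂ B * vv) := by
    intro t ε ht hε
    have hmem : (t₁ B + t, t₂ B + ε) ∈ Set.Ioi (t₁ B) ×ˢ Set.Ioi (t₂ B) := by
      rw [Set.mem_prod, Set.mem_Ioi, Set.mem_Ioi]
      constructor <;> simp <;> linarith
    have := hLQ _ hmem
    rw [hLrep] at this
    simp only at this
    nlinarith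
  obtain ⟨huu, hvv, hc⟩ := key_real hkey
  have hcz : u - (t₁ B * uu + t₂ B * vv) = 0 := le_antisymm (by linarith) hc
  have hsum : uu + vv < 0 := by
    have := hkey 1 1 one_pos one_pos
    rw [hcz] at this
    linarith
  have hsne : uu + vv ≠ 0 := ne_of_lt hsum
  refine ⟨uu / (uu + vv), ?_, B, 1 - B, ⟨⟨hBK.1, hBK.2, by abel⟩, ?_⟩, ?_⟩
  · constructor
    · rw [show uu / (uu + vv) = (-uu) / (-(uu + vv)) by rw [neg_div_neg_eq]]
      apply div_nonneg <;> linarith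
    · rw [div_le_one_iff]
      right; right
      exact ⟨hsum, by linarith⟩
  · intro P₁ P₂ hPOVM
    obtain ⟨hP1, hP2, hsum12⟩ := hPOVM
    have hP2eq : P₂ = 1 - P₁ := by rw [← hsum12]; abel
    have hP1K : P₁ ∈ K := ⟨hP1, by rw [← hP2eq]; exact hP2⟩
    have hLP := hLS _ ⟨P₁, hP1K, rfl⟩
    rw [hLrep] at hLP
    simp only at hLP
    have key2 : t₁ B * uu + t₂ B * vv ≤ t₁ P₁ * uu + t₂ P₁ * vv := by linarith
    have hinv : 1 / (uu + vv) ≤ 0 := le_of_lt (one_div_neg.mpr hsum)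
    have final : ∀ q1 q2 : ℝ, t₁ B * uu + t₂ B * vv ≤ q1 * uu + q2 * vv →
        uu / (uu + vv) * q1 + (1 - uu / (uu + vv)) * q2 ≤
          uu / (uu + vv) * t₁ B + (1 - uu / (uu + vv)) * t₂ B := by
      intro q1 q2 hq
      have e1 : uu / (uu + vv) * q1 + (1 - uu / (uu + vv)) * q2
          = (q1 * uu + q2 * vv) * (1 / (uu + vv)) := by
        field_simp
        ring
      have e2 : uu / (uu + vv) * t₁ B + (1 - uu / (uu + vv)) * t₂ B
          = (t₁ B * uu + t₂ B * vv) * (1 / (uu + vv)) := by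
        field_simp
        ring
      rw [e1, e2]
      exact mul_le_mul_of_nonpos_right hq hinv
    rw [hP2eq]
    exact final (t₁ P₁) (t₂ P₁) key2
  · have hgreat : IsGreatest { x : ℝ | ∃ P₁ P₂ : Matrix (Fin d) (Fin d) ℂ, IsPOVM2 P₁ P₂ ∧
        x = min ((ρ₁ * P₁).trace.re) ((ρ₂ * P₂).trace.re) }
        (min ((ρ₁ * B).trace.re) ((ρ₂ * (1 - B)).trace.re)) := by
      constructor
      · exact ⟨B, 1 - B, ⟨hBK.1, hBK.2, by abel⟩, rfl⟩
      · rintro x ⟨P₁, P₂, ⟨hP1, hP2, hs⟩, rfl⟩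
        have hP2eq : P₂ = 1 - P₁ := by rw [← hs]; abel
        rw [hP2eq]
        exact hmax P₁ ⟨hP1, hP2eq ▸ hP2⟩
    exact hgreat.csSup_eq.symm
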